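/- arXiv:math/0401414 — 6 statements merged into one kernel-verified Lean document; each statement's English description precedes it below -/
import Mathlib

section
/- With A_{n,r}(a,b) defined by θ_n(X;a) = Σ_{r=0}^{n} A_{n,r}(a,b)·θ_r(X;b), one has the closed formula A_{n,r}(a,b) = Σ_J ∏_{i∈{1,...,n}\J} (b_{σ(i,J)} - a_i), where the sum runs over subsets J ⊆ {1,...,n} of size r, and σ(i,J) = 1 + #{j ∈ J : j < i}. -/
open Polynomial Finset

/-- `θ_n(X; c) = ∏_{i=1}^{n} (X - c_i)`, where the sequence `c : ℕ → R` is
0-indexed, i.e. `c i` is the `(i+1)`-st term `c_{i+1}`. -/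
noncomputable def thetaSeq {R : Type*} [CommRing R] (c : ℕ → R) (n : ℕ) : Polynomial R :=
  ∏ i ∈ range n, (X - C (c i))

section Aux

variable {R : Type*} [CommRing R]

/-- The candidate closed formula. -/
noncomputable def Bc (a b : ℕ → R) (n r : ℕ) : R :=
  ∑ J ∈ (range n).powersetCard r,
    ∏ i ∈ range n \ J, (b ((J.filter (fun j => j < i)).card) - a i)

lemma thetaSeq_monic (c : ℕ → R) (n : ℕ) : (thetaSeq c n).Monic :=
  monic_prod_of_monic _ _ fun i _ => monic_X_sub_C _

lemma thetaSeq_natDegree_le (c : ℕ → R) (n : ℕ) : (thetaSeq c n).natDegree ≤ n := by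
  rw [thetaSeq]
  induction n with
  | zero => simp
  | succ n IH =>
    rw [prod_range_succ]
    exact le_trans natDegree_mul_le (add_le_add IH (natDegree_X_sub_C_le (c n)))

lemma thetaSeq_coeff_self (c : ℕ → R) (n : ℕ) : (thetaSeq c n).coeff n = 1 := by
  induction n with
  | zero => simp [thetaSeq]
  | succ n IH =>
    have : thetaSeq c (n + 1) = thetaSeq c n * X - thetaSeq c n * C (c n) := by
      rw [thetaSeq, prod_range_succ, mul_sub]; rfl
    rw [this, coeff_sub, coeff_mul_X, coeff_mul_C, IH,
      coeff_eq_zero_of_natDegree_lt (lt_of_le_of_lt (thetaSeq_natDegree_le c n) (by omega))]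
    ring

lemma theta_indep (b : ℕ → R) : ∀ (m : ℕ) (c : ℕ → R),
    ∑ r ∈ range m, C (c r) * thetaSeq b r = 0 → ∀ r < m, c r = 0 := by
  intro m
  induction m with
  | zero => intro c _ r hr; omega
  | succ m IH =>
    intro c H r hr
    have hcm : c m = 0 := by
      have := congrArg (fun p => Polynomial.coeff p m) H
      simp only [finset_sum_coeff, coeff_C_mul, coeff_zero] at this
      rw [sum_range_succ] at this
      rw [sum_eq_zero, zero_add] at this
      · rwa [thetaSeq_coeff_self, mul_one] at this
      · intro i hi
        rw [coeff_eq_zero_of_natDegree_lt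
          (lt_of_le_of_lt (thetaSeq_natDegree_le b i) (mem_range.mp hi)), mul_zero]
    rcases lt_or_eq_of_le (Nat.lt_succ_iff.mp hr) with h' | h'
    · apply IH c _ r h'
      rw [sum_range_succ, hcm] at H
      simpa using H
    · rwa [h']

lemma Bc_high (a b : ℕ → R) (n r : ℕ) (h : n < r) : Bc a b n r = 0 := by
  rw [Bc, powersetCard_eq_empty.mpr (by simpa using h), sum_empty]

lemma Bc_succ_succ (a b : ℕ → R) (n r : ℕ) :
    Bc a b (n + 1) (r + 1) = Bc a b n r + (b (r + 1) - a n) * Bc a b n (r + 1) := by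
  have hn : n ∉ range n := notMem_range_self
  rw [Bc, range_add_one, powersetCard_succ_insert hn]
  rw [sum_union]
  · -- second part: sums over image of insert n
    have h1 : ∑ J ∈ (powersetCard r (range n)).image (insert n),
        ∏ i ∈ insert n (range n) \ J, (b ((J.filter (fun j => j < i)).card) - a i)
        = Bc a b n r := by
      rw [sum_image]
      · apply sum_congr rfl
        intro J hJ
        have hJsub : J ⊆ range n := (mem_powersetCard.mp hJ).1
        have hnJ : n ∉ J := fun hc => hn (hJsub hc)
        have hset : insert n (range n) \ insert n J = range n \ J := by
          ext x
          simp only [mem_sdiff, mem_insert, mem_range]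
          constructor
          · rintro ⟨hx | hx, hx2⟩
            · exact absurd (Or.inl hx) hx2
            · exact ⟨hx, fun hc => hx2 (Or.inr hc)⟩
          · rintro ⟨hx, hx2⟩
            exact ⟨Or.inr hx, by rintro (rfl | hc); exact absurd hx (lt_irrefl x); exact hx2 hc⟩
        rw [hset]
        apply prod_congr rfl
        intro i hi
        have hi' : i < n := mem_range.mp (mem_sdiff.mp hi).1
        have : (insert n J).filter (fun j => j < i) = J.filter (fun j => j < i) := by
          rw [filter_insert, if_neg (by omega)]
        rw [this]
      · intro J hJ J' hJ' hE
        have hnJ : n ∉ J := fun hc => hn ((mem_powersetCard.mp hJ).1 hc)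
        have hnJ' : n ∉ J' := fun hc => hn ((mem_powersetCard.mp hJ').1 hc)
        have := congrArg (Finset.erase · n) hE
        simpa [erase_insert hnJ, erase_insert hnJ'] using this
    have h2 : ∑ J ∈ powersetCard (r + 1) (range n),
        ∏ i ∈ insert n (range n) \ J, (b ((J.filter (fun j => j < i)).card) - a i)
        = (b (r + 1) - a n) * Bc a b n (r + 1) := by
      rw [Bc, mul_sum]
      apply sum_congr rfl
      intro J hJ
      obtain ⟨hJsub, hJcard⟩ := mem_powersetCard.mp hJ
      have hnJ : n ∉ J := fun hc => hn (hJsub hc)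
      have hset : insert n (range n) \ J = insert n (range n \ J) := by
        rw [insert_sdiff_of_notMem _ hnJ]
      rw [hset, prod_insert (by simp)]
      congr 1
      · congr 1
        have : J.filter (fun j => j < n) = J := by
          apply filter_true_of_mem
          intro j hj
          exact mem_range.mp (hJsub hj)
        rw [this, hJcard]
    rw [h1, h2, add_comm]
  · -- disjointness
    rw [disjoint_right]
    intro J hJ hJ'
    obtain ⟨K, hK, rfl⟩ := mem_image.mp hJ
    have hKsub : K ⊆ range n := (mem_powersetCard.mp hK).1
    have hsub : insert n K ⊆ range n := (mem_powersetCard.mp hJ').1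
    exact hn (hsub (mem_insert_self n K))

lemma Bc_succ_zero (a b : ℕ → R) (n : ℕ) :
    Bc a b (n + 1) 0 = (b 0 - a n) * Bc a b n 0 := by
  simp only [Bc, powersetCard_zero, sum_singleton, sdiff_empty, filter_empty, card_empty]
  rw [range_add_one, prod_insert notMem_range_self]

lemma Bc_expansion (a b : ℕ → R) : ∀ n : ℕ,
    thetaSeq a n = ∑ r ∈ range (n + 1), C (Bc a b n r) * thetaSeq b r := by
  intro n
  induction n with
  | zero => simp [thetaSeq, Bc]
  | succ n IH =>
    have hmul : ∀ r : ℕ, thetaSeq b r * (X - C (a n)) =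
        thetaSeq b (r + 1) + C (b r - a n) * thetaSeq b r := by
      intro r
      rw [thetaSeq, thetaSeq, prod_range_succ]
      rw [C_sub]
      ring
    have step : thetaSeq a (n + 1) = thetaSeq a n * (X - C (a n)) := by
      rw [thetaSeq, thetaSeq, prod_range_succ]
    rw [step, IH, sum_mul]
    have : ∀ r ∈ range (n + 1),
        C (Bc a b n r) * thetaSeq b r * (X - C (a n)) =
        C (Bc a b n r) * thetaSeq b (r + 1) +
          C ((b r - a n) * Bc a b n r) * thetaSeq b r := by
      intro r _
      rw [mul_assoc, hmul r, mul_add, C_mul]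
      ring
    rw [sum_congr rfl this, sum_add_distrib]
    -- extend the second sum to range (n+2)
    have hext : ∑ r ∈ range (n + 1), C ((b r - a n) * Bc a b n r) * thetaSeq b r
        = ∑ r ∈ range (n + 2), C ((b r - a n) * Bc a b n r) * thetaSeq b r := by
      rw [sum_range_succ (n := n + 1), Bc_high a b n (n + 1) (by omega)]
      simp
    rw [hext, sum_range_succ' (fun r => C ((b r - a n) * Bc a b n r) * thetaSeq b r) (n + 1)]
    rw [sum_range_succ' (fun r => C (Bc a b (n + 1) r) * thetaSeq b r) (n + 1)]
    rw [← add_assoc, ← sum_add_distrib]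
    congr 1
    · apply sum_congr rfl
      intro r _
      rw [Bc_succ_succ, C_add, C_mul]
      ring
    · rw [Bc_succ_zero, C_mul]

end Aux

/-- The closed formula
`A_{n,r}(a,b) = Σ_{J ⊆ {1,…,n}, |J| = r} ∏_{i ∉ J} (b_{σ(i,J)} - a_i)`,
where `σ(i,J) = 1 + #{j ∈ J : j < i}`.  With 0-indexed sequences
(`a i = a_{i+1}`, `b i = b_{i+1}`) the subsets `J` range over `{0,…,n-1}` and
the index `σ(i,J) - 1` becomes `#{j ∈ J : j < i}`. -/
theorem stmt5 {R : Type*} [CommRing R] (a b : ℕ → R) (A : ℕ → ℕ → R)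
    (h : ∀ n : ℕ, thetaSeq a n = ∑ r ∈ range (n + 1), C (A n r) * thetaSeq b r)
    (hhigh : ∀ n r : ℕ, n < r → A n r = 0) :
    ∀ n r : ℕ, A n r = ∑ J ∈ (range n).powersetCard r,
      ∏ i ∈ range n \ J, (b ((J.filter (fun j => j < i)).card) - a i) := by
  intro n r
  show A n r = Bc a b n r
  rcases le_or_gt r n with hrn | hrn
  · have H : ∑ s ∈ range (n + 1), C (A n s - Bc a b n s) * thetaSeq b s = 0 := by
      have := (h n).symm.trans (Bc_expansion a b n)
      rw [← sub_eq_zero, ← sum_sub_distrib] at this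
      convert this using 2 with s
      rw [C_sub, sub_mul]
    have := theta_indep b (n + 1) (fun s => A n s - Bc a b n s) H r (by omega)
    exact sub_eq_zero.mp this
  · rw [hhigh n r hrn, Bc_high a b n r hrn]
end

section
/- For sequences c in a commutative ring R and integers r ≥ m ≥ 0, s ≥ 0: θ_r(X;c)·θ_s(X;c) = θ_m(X;c)·Σ_{j=s}^{r+s-m} A_{r-m,j-s}(c[m], c[s])·θ_j(X;c), where c[k] denotes the shifted sequence (c_{k+i})_{i≥1}. -/
open Polynomial Finset

lemma thetaSeq_add {R : Type*} [CommRing R] (c : ℕ → R) (m k : ℕ) :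
    thetaSeq c (m + k) = thetaSeq c m * thetaSeq (fun i => c (m + i)) k := by
  simp [thetaSeq, prod_range_add]

/-- For `r ≥ m ≥ 0`, `s ≥ 0`:
`θ_r(X;c)·θ_s(X;c) = θ_m(X;c)·Σ_{j=s}^{r+s-m} A_{r-m,j-s}(c[m], c[s])·θ_j(X;c)`,
where `c[k]` is the shifted sequence and `A` is defined by the expansions
`θ_n(X;a) = Σ_{r=0}^{n} A(a,b,n,r)·θ_r(X;b)`. -/
theorem stmt6 {R : Type*} [CommRing R] (A : (ℕ → R) → (ℕ → R) → ℕ → ℕ → R)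
    (h : ∀ (a b : ℕ → R) (n : ℕ),
      thetaSeq a n = ∑ r ∈ range (n + 1), C (A a b n r) * thetaSeq b r) :
    ∀ (c : ℕ → R) (r m s : ℕ), m ≤ r →
      thetaSeq c r * thetaSeq c s =
        thetaSeq c m * ∑ j ∈ Finset.Icc s (r + s - m),
          C (A (fun i => c (m + i)) (fun i => c (s + i)) (r - m) (j - s)) *
            thetaSeq c j := by
  intro c r m s hmr
  have hr : r = m + (r - m) := by omega
  have hsum : Finset.Icc s (r + s - m) = (range (r - m + 1)).map
      ⟨fun j => s + j, add_right_injective s⟩ := by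
    ext j
    simp only [Finset.mem_Icc, Finset.mem_map, Finset.mem_range,
      Function.Embedding.coeFn_mk]
    constructor
    · intro ⟨h1, h2⟩; exact ⟨j - s, by omega, by omega⟩
    · rintro ⟨k, hk, rfl⟩; omega
  rw [hsum, Finset.sum_map]
  simp only [Function.Embedding.coeFn_mk, Nat.add_sub_cancel_left]
  calc thetaSeq c r * thetaSeq c s
      = thetaSeq c m * (thetaSeq (fun i => c (m + i)) (r - m) * thetaSeq c s) := by
        conv_lhs => rw [hr, thetaSeq_add]; rw [mul_assoc]
    _ = thetaSeq c m * ((∑ k ∈ range (r - m + 1),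
          C (A (fun i => c (m + i)) (fun i => c (s + i)) (r - m) k) *
            thetaSeq (fun i => c (s + i)) k) * thetaSeq c s) := by
        rw [h (fun i => c (m + i)) (fun i => c (s + i)) (r - m)]
    _ = thetaSeq c m * ∑ k ∈ range (r - m + 1),
          C (A (fun i => c (m + i)) (fun i => c (s + i)) (r - m) k) *
            thetaSeq c (s + k) := by
        rw [Finset.sum_mul]
        congr 1
        refine Finset.sum_congr rfl fun k _ => ?_
        rw [thetaSeq_add c s k]; ring
end

section
/- Let p be an odd prime, q primitive mod p², q̂ = q^{p-1}, and θ̂_n(X) = ∏_{i=0}^{n-1}(X − q̂^i). Define integers s(n,i) by θ̂_n(X) = Σ_{i=1}^{n} s(n,i)(X−1)^i for n ≥ 1. Then s(n,i) is divisible by p^{n-i} for all 1 ≤ i ≤ n. -/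
open Polynomial Finset

private lemma keycoeff (p : ℕ) (c : ℕ → ℤ) (h : ∀ n, (p : ℤ) ∣ c n) :
    ∀ n i, i ≤ n →
      (p : ℤ) ^ (n - i) ∣ ((∏ j ∈ range n, (X - C (c j)) : Polynomial ℤ)).coeff i := by
  intro n
  induction n with
  | zero =>
    intro i hi
    interval_cases i
    simp
  | succ n ih =>
    intro i hi
    rw [prod_range_succ]
    cases i with
    | zero =>
      rw [mul_coeff_zero]
      have h1 : ((X : Polynomial ℤ) - C (c n)).coeff 0 = -(c n) := by simp
      rw [h1]
      have : (n + 1 - 0) = (n - 0) + 1 := by omega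
      rw [this, pow_succ]
      exact mul_dvd_mul (ih 0 (Nat.zero_le n)) ((dvd_neg).mpr (h n))
    | succ j =>
      have hexp : n + 1 - (j + 1) = n - j := by omega
      rw [hexp]
      have hco : ((∏ j ∈ range n, (X - C (c j)) : Polynomial ℤ) * (X - C (c n))).coeff (j + 1)
          = (∏ j ∈ range n, (X - C (c j)) : Polynomial ℤ).coeff j
            - c n * (∏ j ∈ range n, (X - C (c j)) : Polynomial ℤ).coeff (j + 1) := by
        rw [mul_sub, coeff_sub, coeff_mul_X, mul_comm, coeff_C_mul]
      rw [hco]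
      by_cases hj : j + 1 ≤ n
      · apply dvd_sub
        · exact ih j (by omega)
        · have : n - j = (n - (j + 1)) + 1 := by omega
          rw [this, pow_succ, mul_comm ((p:ℤ) ^ (n - (j+1))) (p:ℤ)]
          exact mul_dvd_mul (h n) (ih (j + 1) hj)
      · have : n - j = 0 := by omega
        rw [this, pow_zero]
        exact one_dvd _

/-- Let `p` be an odd prime, `q` primitive mod `p²`, `q̂ = q^{p-1}`, and
`θ̂_n(X) = ∏_{i=0}^{n-1}(X − q̂^i)`.  If the integers `s(n,i)` satisfy
`θ̂_n(X) = Σ_{i=1}^{n} s(n,i)(X−1)^i` for `n ≥ 1`, then `p^{n-i} ∣ s(n,i)`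
for all `1 ≤ i ≤ n`. -/
theorem stmt8 (p : ℕ) (hp : p.Prime) (hodd : Odd p) (q : ℤ)
    (hq : orderOf (q : ZMod (p ^ 2)) = p * (p - 1))
    (s : ℕ → ℕ → ℤ)
    (hs : ∀ n : ℕ, 1 ≤ n →
      (∏ i ∈ range n, (X - C ((q ^ (p - 1)) ^ i)) : Polynomial ℤ) =
        ∑ i ∈ Finset.Icc 1 n, C (s n i) * (X - 1) ^ i) :
    ∀ n i : ℕ, 1 ≤ i → i ≤ n → (p : ℤ) ^ (n - i) ∣ s n i := by
  have hp1 : 2 ≤ p := hp.two_le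
  -- q is not divisible by p
  have hord : (q : ZMod (p ^ 2)) ^ (p * (p - 1)) = 1 := by
    rw [← hq]; exact pow_orderOf_eq_one _
  have hqp : ¬ (p : ℤ) ∣ q := by
    haveI : Fact p.Prime := ⟨hp⟩
    intro hdvd
    have hpdvd : (p : ℕ) ∣ p ^ 2 := dvd_pow_self p two_ne_zero
    have h2 := congrArg (ZMod.castHom hpdvd (ZMod p)) hord
    rw [map_pow, map_one, map_intCast] at h2
    have hq0 : (q : ZMod p) = 0 :=
      (ZMod.intCast_zmod_eq_zero_iff_dvd q p).mpr (by exact_mod_cast hdvd)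
    rw [hq0, zero_pow (Nat.mul_ne_zero (by omega) (by omega))] at h2
    exact zero_ne_one h2
  -- Fermat: p ∣ q^(p-1) - 1
  have hfermat : (p : ℤ) ∣ q ^ (p - 1) - 1 := by
    haveI : Fact p.Prime := ⟨hp⟩
    have hne : (q : ZMod p) ≠ 0 := by
      rw [Ne, ZMod.intCast_zmod_eq_zero_iff_dvd]
      exact_mod_cast hqp
    have := ZMod.pow_card_sub_one_eq_one hne
    have : ((q ^ (p - 1) - 1 : ℤ) : ZMod p) = 0 := by push_cast [this]; ring
    exact (ZMod.intCast_zmod_eq_zero_iff_dvd _ p).mp this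
  set qh : ℤ := q ^ (p - 1) with hqh
  have hdvd : ∀ n : ℕ, (p : ℤ) ∣ qh ^ n - 1 := by
    intro n
    exact dvd_trans hfermat (by simpa using sub_dvd_pow_sub_pow qh 1 n)
  intro n i h1 hin
  have hn : 1 ≤ n := le_trans h1 hin
  have heq := hs n hn
  -- compose with X + 1
  have heq2 := congrArg (fun f : Polynomial ℤ => f.comp (X + 1)) heq
  simp only [Polynomial.prod_comp, Polynomial.sum_comp, mul_comp, sub_comp, pow_comp, X_comp, C_comp, one_comp,
    add_sub_cancel_right] at heq2
  have hL : (∏ j ∈ range n, ((X : Polynomial ℤ) + 1 - C (qh ^ j)))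
      = ∏ j ∈ range n, ((X : Polynomial ℤ) - C (qh ^ j - 1)) := by
    refine Finset.prod_congr rfl fun j _ => ?_
    rw [C_sub, C_1]; ring
  rw [hL] at heq2
  have hsval : s n i = (∏ j ∈ range n, ((X : Polynomial ℤ) - C (qh ^ j - 1))).coeff i := by
    rw [heq2, finset_sum_coeff]
    simp only [coeff_C_mul, coeff_X_pow]
    rw [Finset.sum_eq_single i]
    · simp
    · intro b _ hb
      rw [if_neg (fun h => hb h.symm), mul_zero]
    · intro hnotmem
      exact absurd (Finset.mem_Icc.mpr ⟨h1, hin⟩) hnotmem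
  rw [hsval]
  exact keycoeff p (fun j => qh ^ j - 1) hdvd n i hin
end

section
/- Let p be an odd prime, q primitive mod p², q̂ = q^{p-1}, θ̂_n(X) = ∏_{i=0}^{n-1}(X − q̂^i). Define S(n,i) ∈ ℤ by (X−1)^n = Σ_{i=1}^{n} S(n,i)·θ̂_i(X) for n ≥ 1. Then S(n,i) is divisible by p^{n-i}, S(n,n) = 1, and S(n,1) = (q̂−1)^{n-1}. -/
open Polynomial Finset

/-- Let `p` be an odd prime, `q` primitive mod `p²`, `q̂ = q^{p-1}`, and
`θ̂_n(X) = ∏_{i=0}^{n-1}(X − q̂^i)`.  If the integers `S(n,i)` satisfy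
`(X−1)^n = Σ_{i=1}^{n} S(n,i)·θ̂_i(X)` for `n ≥ 1`, then `p^{n-i} ∣ S(n,i)`,
`S(n,n) = 1`, and `S(n,1) = (q̂−1)^{n-1}`. -/
theorem stmt9 (p : ℕ) (hp : p.Prime) (hodd : Odd p) (q : ℤ)
    (hq : orderOf (q : ZMod (p ^ 2)) = p * (p - 1))
    (S : ℕ → ℕ → ℤ)
    (hS : ∀ n : ℕ, 1 ≤ n →
      ((X - 1) ^ n : Polynomial ℤ) =
        ∑ i ∈ Finset.Icc 1 n,
          C (S n i) * ∏ k ∈ range i, (X - C ((q ^ (p - 1)) ^ k))) :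
    (∀ n i : ℕ, 1 ≤ i → i ≤ n → (p : ℤ) ^ (n - i) ∣ S n i) ∧
    (∀ n : ℕ, 1 ≤ n → S n n = 1) ∧
    (∀ n : ℕ, 1 ≤ n → S n 1 = (q ^ (p - 1) - 1) ^ (n - 1)) := by
  haveI : Fact p.Prime := ⟨hp⟩
  set a : ℤ := q ^ (p - 1) with ha_def
  have hp2 : 2 ≤ p := hp.two_le
  have hp3 : 3 ≤ p := by
    have h2 : p % 2 = 1 := Nat.odd_iff.mp hodd
    omega
  have hp16 : 6 ≤ p * (p - 1) := by
    calc 6 = 3 * 2 := rfl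
    _ ≤ p * (p - 1) := Nat.mul_le_mul hp3 (by omega)
  have hqpow : (q : ZMod (p ^ 2)) ^ (p * (p - 1)) = 1 := by
    rw [← hq]; exact pow_orderOf_eq_one _
  haveI : NeZero (p ^ 2) := ⟨by positivity⟩
  haveI : Nontrivial (ZMod (p ^ 2)) := by
    have : 1 < p ^ 2 := by nlinarith
    exact ZMod.nontrivial_iff.mpr (by omega)
  -- q is not divisible by p
  have hqp : ¬ ((p : ℤ) ∣ q) := by
    intro hdvd
    have h2 : ((p : ℤ)) ^ 2 ∣ q ^ 2 := pow_dvd_pow_of_dvd hdvd 2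
    have hz : ((q : ZMod (p ^ 2))) ^ 2 = 0 := by
      have : ((q ^ 2 : ℤ) : ZMod (p ^ 2)) = 0 := by
        rw [ZMod.intCast_zmod_eq_zero_iff_dvd]; exact_mod_cast h2
      simpa using this
    have h0 : (q : ZMod (p ^ 2)) ^ (p * (p - 1)) = 0 := by
      calc (q : ZMod (p ^ 2)) ^ (p * (p - 1))
          = (q : ZMod (p ^ 2)) ^ 2 * (q : ZMod (p ^ 2)) ^ (p * (p - 1) - 2) := by
            rw [← pow_add]; congr 1; omega
        _ = 0 := by rw [hz, zero_mul]
    rw [hqpow] at h0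
    exact one_ne_zero h0
  -- p ∣ a - 1
  have hpa : (p : ℤ) ∣ a - 1 := by
    have hq0 : (q : ZMod p) ≠ 0 := by
      rw [Ne, ZMod.intCast_zmod_eq_zero_iff_dvd]; exact hqp
    have h1 := ZMod.pow_card_sub_one_eq_one hq0
    have h2 : ((a - 1 : ℤ) : ZMod p) = 0 := by
      push_cast [ha_def]
      rw [h1]; ring
    rwa [ZMod.intCast_zmod_eq_zero_iff_dvd] at h2
  have hpai : ∀ i : ℕ, (p : ℤ) ∣ a ^ i - 1 := fun i =>
    hpa.trans (by simpa using sub_dvd_pow_sub_pow a 1 i)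
  -- 1 < a
  have ha1 : 1 < a := by
    have habs : 2 ≤ |q| := by
      by_contra h
      push_neg at h
      obtain ⟨h1, h2⟩ := abs_le.mp (by omega : |q| ≤ 1)
      interval_cases q
      · have hd : orderOf ((-1 : ℤ) : ZMod (p ^ 2)) ∣ 2 :=
          orderOf_dvd_of_pow_eq_one (by push_cast; ring)
        rw [hq] at hd
        exact absurd (Nat.le_of_dvd (by norm_num) hd) (by omega)
      · have h0 : ((0 : ℤ) : ZMod (p ^ 2)) ^ (p * (p - 1)) = 0 := by
          push_cast; exact zero_pow (by omega)
        rw [hqpow] at h0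
        exact one_ne_zero h0
      · have h1' : orderOf ((1 : ℤ) : ZMod (p ^ 2)) = 1 := by push_cast; exact orderOf_one
        rw [hq] at h1'; omega
    have hev : Even (p - 1) := Nat.Odd.sub_odd hodd odd_one
    have haq : a = |q| ^ (p - 1) := by rw [ha_def, hev.pow_abs]
    rw [haq]
    calc (1 : ℤ) < 2 ^ (p - 1) := one_lt_pow₀ (by norm_num) (by omega)
      _ ≤ |q| ^ (p - 1) := pow_le_pow_left₀ (by norm_num) habs _
  have hane : ∀ j k : ℕ, k < j → a ^ j - a ^ k ≠ 0 := by
    intro j k hkj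
    have := pow_lt_pow_right₀ ha1 hkj
    omega
  -- uniqueness of coefficients
  have huniq : ∀ (m : ℕ) (c : ℕ → ℤ),
      (∑ i ∈ Icc 1 m, C (c i) * ∏ k ∈ range i, (X - C (a ^ k)) = 0) →
      ∀ j, 1 ≤ j → j ≤ m → c j = 0 := by
    intro m c hsum j
    induction j using Nat.strong_induction_on with
    | _ j ih =>
      intro hj1 hjm
      have heval := congrArg (Polynomial.eval (a ^ j)) hsum
      rw [Polynomial.eval_finset_sum] at heval
      simp only [Polynomial.eval_mul, Polynomial.eval_C, Polynomial.eval_prod,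
        Polynomial.eval_sub, Polynomial.eval_X, Polynomial.eval_pow, Polynomial.eval_zero] at heval
      rw [Finset.sum_eq_single j] at heval
      · have hprod : ∏ k ∈ range j, (a ^ j - a ^ k) ≠ 0 :=
          Finset.prod_ne_zero_iff.mpr fun k hk => hane j k (mem_range.mp hk)
        exact (mul_eq_zero.mp heval).resolve_right hprod
      · intro i hi hij
        rcases lt_or_gt_of_ne hij with h | h
        · rw [ih i h (mem_Icc.mp hi).1 (by omega : i ≤ m)]; ring
        · have hz : ∏ k ∈ range i, (a ^ j - a ^ k) = 0 :=
            Finset.prod_eq_zero (mem_range.mpr h) (by ring)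
          rw [hz, mul_zero]
      · intro h; exact absurd (mem_Icc.mpr ⟨hj1, hjm⟩) h
  -- monicity / degree facts
  have hmono : ∀ i : ℕ, (∏ k ∈ range i, (X - C (a ^ k)) : Polynomial ℤ).Monic :=
    fun i => monic_prod_of_monic _ _ fun k _ => monic_X_sub_C _
  have hdeg : ∀ i : ℕ, (∏ k ∈ range i, (X - C (a ^ k)) : Polynomial ℤ).natDegree = i := by
    intro i
    rw [Polynomial.natDegree_prod_of_monic _ _ fun k _ => monic_X_sub_C _,
      Finset.sum_congr rfl fun k _ => natDegree_X_sub_C _]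
    simp
  -- S n n = 1
  have hSnn : ∀ n : ℕ, 1 ≤ n → S n n = 1 := by
    intro n hn
    have hc := congrArg (fun P : Polynomial ℤ => P.coeff n) (hS n hn)
    have hL : ((X - 1 : Polynomial ℤ) ^ n).coeff n = 1 := by
      have h1 : ((X - C 1 : Polynomial ℤ) ^ n).coeff n = 1 := by
        have h2 := ((monic_X_sub_C (1 : ℤ)).pow n).coeff_natDegree
        rwa [natDegree_pow, natDegree_X_sub_C, mul_one] at h2
      simpa using h1
    rw [hL, Polynomial.finset_sum_coeff] at hc
    rw [Finset.sum_eq_single n] at hc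
    · rw [coeff_C_mul] at hc
      have h3 : (∏ k ∈ range n, (X - C (a ^ k)) : Polynomial ℤ).coeff n = 1 := by
        have := (hmono n).coeff_natDegree
        rwa [hdeg] at this
      rw [h3, mul_one] at hc
      exact hc.symm
    · intro i hi hin
      rw [coeff_C_mul, coeff_eq_zero_of_natDegree_lt, mul_zero]
      rw [hdeg]
      exact lt_of_le_of_ne (mem_Icc.mp hi).2 hin
    · intro h; exact absurd (mem_Icc.mpr ⟨hn, le_refl n⟩) h
  -- S n 1 = (a - 1)^(n-1)
  have hSn1 : ∀ n : ℕ, 1 ≤ n → S n 1 = (a - 1) ^ (n - 1) := by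
    intro n hn
    have heval := congrArg (Polynomial.eval a) (hS n hn)
    rw [Polynomial.eval_pow, Polynomial.eval_finset_sum] at heval
    simp only [Polynomial.eval_mul, Polynomial.eval_C, Polynomial.eval_prod,
      Polynomial.eval_sub, Polynomial.eval_X, Polynomial.eval_pow, Polynomial.eval_one] at heval
    rw [Finset.sum_eq_single 1] at heval
    · simp only [Finset.prod_range_one, pow_zero] at heval
      have hcancel : (a - 1) ^ n = (a - 1) ^ (n - 1) * (a - 1) := by
        rw [← pow_succ]; congr 1; omega
      rw [hcancel] at heval
      have hne : a - 1 ≠ 0 := by omega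
      exact (mul_right_cancel₀ hne heval.symm)
    · intro i hi hi1
      have h2i : 2 ≤ i := by
        have := (mem_Icc.mp hi).1; omega
      have hz : ∏ k ∈ range i, (a - a ^ k) = 0 :=
        Finset.prod_eq_zero (mem_range.mpr (by omega : 1 < i)) (by rw [pow_one, sub_self])
      rw [hz, mul_zero]
    · intro h; exact absurd (mem_Icc.mpr ⟨le_refl 1, hn⟩) h
  -- the recurrence
  have hrec : ∀ n : ℕ, 1 ≤ n → ∀ i : ℕ, 2 ≤ i → i ≤ n →
      S (n + 1) i = S n (i - 1) + (a ^ i - 1) * S n i := by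
    intro n hn i h2i hin
    -- define residual coefficients
    set c : ℕ → ℤ := fun j =>
      S (n + 1) j - ((if 2 ≤ j then S n (j - 1) else 0) +
        (if j ≤ n then (a ^ j - 1) * S n j else 0)) with hc_def
    have hkey' : ∀ j : ℕ, (X - 1) * ∏ k ∈ range j, (X - C (a ^ k)) =
        (∏ k ∈ range (j + 1), (X - C (a ^ k))) +
          C (a ^ j - 1) * ∏ k ∈ range j, (X - C (a ^ k)) := by
      intro j
      rw [prod_range_succ, map_sub, map_one]
      ring
    -- step 1
    have hA : ∑ j ∈ Icc 1 (n + 1), C (if 2 ≤ j then S n (j - 1) else 0) *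
          ∏ k ∈ range j, (X - C (a ^ k)) =
        ∑ j ∈ Icc 1 n, C (S n j) * ∏ k ∈ range (j + 1), (X - C (a ^ k)) := by
      have h1 : ∑ j ∈ Icc 1 (n + 1), C (if 2 ≤ j then S n (j - 1) else 0) *
            ∏ k ∈ range j, (X - C (a ^ k)) =
          ∑ j ∈ Icc 2 (n + 1), C (S n (j - 1)) * ∏ k ∈ range j, (X - C (a ^ k)) := by
        rw [← Finset.sum_subset (Finset.Icc_subset_Icc_left (by omega : 1 ≤ 2))]
        · exact Finset.sum_congr rfl fun j hj => by
            rw [if_pos (mem_Icc.mp hj).1]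
        · intro x hx hnx
          have hx1 : x = 1 := by
            have h1' := mem_Icc.mp hx
            have h2 : ¬ (2 ≤ x ∧ x ≤ n + 1) := fun h => hnx (mem_Icc.mpr h)
            omega
          subst hx1
          norm_num
      rw [h1, ← Finset.Ico_add_one_right_eq_Icc, ← Finset.Ico_add_one_right_eq_Icc,
        Finset.sum_Ico_eq_sum_range, Finset.sum_Ico_eq_sum_range]
      have hcard : n + 1 + 1 - 2 = n + 1 - 1 := by omega
      rw [hcard]
      apply Finset.sum_congr rfl
      intro j _
      have e1 : 2 + j - 1 = 1 + j := by omega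
      have e2 : 2 + j = 1 + j + 1 := by omega
      rw [e1, e2]
    -- step 2
    have hB : ∑ j ∈ Icc 1 (n + 1), C (if j ≤ n then (a ^ j - 1) * S n j else 0) *
          ∏ k ∈ range j, (X - C (a ^ k)) =
        ∑ j ∈ Icc 1 n, C ((a ^ j - 1) * S n j) * ∏ k ∈ range j, (X - C (a ^ k)) := by
      rw [Finset.sum_Icc_succ_top (by omega : 1 ≤ n + 1)]
      rw [if_neg (by omega : ¬ (n + 1 ≤ n))]
      rw [map_zero, zero_mul, add_zero]
      exact Finset.sum_congr rfl fun j hj => by rw [if_pos (mem_Icc.mp hj).2]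
    -- step 3: residual sum is zero
    have hsum0 : ∑ j ∈ Icc 1 (n + 1), C (c j) * ∏ k ∈ range j, (X - C (a ^ k)) = 0 := by
      have e1 : ∀ j, C (c j) * ∏ k ∈ range j, (X - C (a ^ k)) =
          C (S (n + 1) j) * ∏ k ∈ range j, (X - C (a ^ k)) -
          (C (if 2 ≤ j then S n (j - 1) else 0) * ∏ k ∈ range j, (X - C (a ^ k)) +
           C (if j ≤ n then (a ^ j - 1) * S n j else 0) * ∏ k ∈ range j, (X - C (a ^ k))) := by
        intro j
        rw [hc_def]
        simp only [map_sub, map_add]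
        ring
      rw [Finset.sum_congr rfl fun j _ => e1 j, Finset.sum_sub_distrib,
        Finset.sum_add_distrib, ← hS (n + 1) (by omega), hA, hB, sub_eq_zero]
      calc ((X - 1 : Polynomial ℤ)) ^ (n + 1) = (X - 1) * (X - 1) ^ n := by ring
        _ = ∑ j ∈ Icc 1 n, C (S n j) * ((X - 1) * ∏ k ∈ range j, (X - C (a ^ k))) := by
            rw [hS n hn, Finset.mul_sum]
            exact Finset.sum_congr rfl fun j _ => by ring
        _ = ∑ j ∈ Icc 1 n, (C (S n j) * ∏ k ∈ range (j + 1), (X - C (a ^ k)) +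
              C ((a ^ j - 1) * S n j) * ∏ k ∈ range j, (X - C (a ^ k))) := by
            apply Finset.sum_congr rfl
            intro j _
            rw [hkey' j, map_mul]
            ring
        _ = _ := by rw [Finset.sum_add_distrib]
    have hci := huniq (n + 1) c hsum0 i (by omega) (by omega)
    rw [hc_def] at hci
    simp only [if_pos h2i, if_pos hin] at hci
    linarith
  -- assemble
  refine ⟨?_, hSnn, fun n hn => hSn1 n hn⟩
  intro n
  induction n with
  | zero => intro i h1 h2; omega
  | succ n ihn =>
    intro i h1 h2
    by_cases hi : i = n + 1
    · subst hi
      rw [hSnn (n + 1) (by omega)]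
      simp
    by_cases hi1 : i = 1
    · subst hi1
      rw [hSn1 (n + 1) (by omega)]
      simp only [Nat.add_sub_cancel]
      exact pow_dvd_pow_of_dvd hpa n
    · rw [hrec n (by omega) i (by omega) (by omega)]
      apply dvd_add
      · have he : n + 1 - i = n - (i - 1) := by omega
        rw [he]
        exact ihn (i - 1) (by omega) (by omega)
      · have he : n + 1 - i = 1 + (n - i) := by omega
        rw [he, pow_add, pow_one]
        exact mul_dvd_mul (hpai i) (ihn i (by omega) (by omega))
end

section
/- Let q be transcendental over ℚ and define Θ_n(X) = ∏_{i=1}^{n}(X − q̄_i), where q̄_i = q^{(−1)^i⌊i/2⌋} (so the sequence is 1, q, q^{−1}, q², q^{−2}, ...). Then for all n ≥ 0, Θ_n(X) = Σ_{j=0}^{n} (−1)^{n−j} q^{e(n,j)} [n choose j]_q X^j, where e(n,j) = −(n−j)(j−1)/2 if n is even and e(n,j) = −(n−j)j/2 if n is odd. -/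
open Polynomial Finset

/-- `θ_n(x) = ∏_{k=0}^{n-1} (x - q^k)`. -/
noncomputable def thetaEval {K : Type*} [Field K] (q x : K) (n : ℕ) : K :=
  ∏ k ∈ range n, (x - q ^ k)

/-- Gaussian binomial coefficient `[n choose j]_q = θ_j(q^n)/θ_j(q^j)`. -/
noncomputable def gaussBinom {K : Type*} [Field K] (q : K) (n j : ℕ) : K :=
  thetaEval q (q ^ n) j / thetaEval q (q ^ j) j

/-- `Θ_n(X) = ∏_{i=1}^{n}(X − q̄_i)` where `q̄_i = q^{(−1)^i·⌊i/2⌋}`,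
i.e. the sequence `1, q, q⁻¹, q², q⁻², …`. -/
noncomputable def ThetaPoly {K : Type*} [Field K] (q : K) (n : ℕ) : Polynomial K :=
  ∏ i ∈ Finset.Icc 1 n, (X - C (q ^ ((-1 : ℤ) ^ i * ((i : ℤ) / 2))))

/-- The exponent `e(n,j)`: `−(n−j)(j−1)/2` if `n` is even, `−(n−j)j/2` if `n` is odd. -/
def eExp (n j : ℕ) : ℤ :=
  if Even n then -(((n : ℤ) - j) * ((j : ℤ) - 1)) / 2
  else -(((n : ℤ) - j) * (j : ℤ)) / 2

/-- The base exponent `a(n) = 1 - ⌊(n+1)/2⌋`. -/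
def Aexp (n : ℕ) : ℤ := 1 - ((n : ℤ) + 1) / 2

lemma choose2_succ (m : ℕ) : (m + 1).choose 2 = m.choose 2 + m := by
  rw [Nat.choose_succ_succ, Nat.choose_one_right, Nat.add_comm]

lemma two_mul_choose2 (m : ℕ) : 2 * (m.choose 2 : ℤ) = m * ((m : ℤ) - 1) := by
  induction m with
  | zero => simp
  | succ m ih =>
    have h : ((m + 1).choose 2 : ℤ) = (m.choose 2 : ℤ) + m := by
      exact_mod_cast congrArg (Nat.cast (R := ℤ)) (choose2_succ m)
    rw [h]
    push_cast
    linear_combination ih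

lemma exp_eq (n j : ℕ) (h : j ≤ n) :
    Aexp n * ((n : ℤ) - j) + ((n - j).choose 2 : ℤ) = eExp n j := by
  have hch : 2 * (((n - j).choose 2 : ℤ)) = ((n : ℤ) - j) * (((n : ℤ) - j) - 1) := by
    rw [two_mul_choose2, Nat.cast_sub h]
  rcases Nat.even_or_odd n with hn | hn
  · have h1 : 2 * (((n : ℤ) + 1) / 2) = n := by
      obtain ⟨k, hk⟩ := hn; subst hk; push_cast; omega
    have he : Even (((n : ℤ) - j) * ((j : ℤ) - 1)) := by
      rcases Int.even_or_odd (j : ℤ) with hj | hj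
      · refine Even.mul_right ?_ _
        have hni : Even (n : ℤ) := by obtain ⟨k, hk⟩ := hn; exact ⟨k, by push_cast; omega⟩
        exact Int.even_sub.mpr (iff_of_true hni hj)
      · exact Even.mul_left (Int.even_sub.mpr (by simp [Int.not_even_iff_odd.mpr hj])) _
    obtain ⟨s, hs⟩ := he
    have heE : eExp n j = -s := by
      rw [eExp, if_pos hn, hs, show -((s : ℤ) + s) = 2 * (-s) by ring,
        Int.mul_ediv_cancel_left _ two_ne_zero]
    rw [heE, Aexp]
    refine mul_left_cancel₀ (two_ne_zero (α := ℤ)) ?_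
    linear_combination (-(n : ℤ) + j) * h1 + hch - hs
  · have h1 : 2 * (((n : ℤ) + 1) / 2) = n + 1 := by
      obtain ⟨k, hk⟩ := hn; subst hk; push_cast; omega
    have he : Even (((n : ℤ) - j) * (j : ℤ)) := by
      rcases Int.even_or_odd (j : ℤ) with hj | hj
      · exact Even.mul_left hj _
      · refine Even.mul_right ?_ _
        have hni : Odd (n : ℤ) := by obtain ⟨k, hk⟩ := hn; exact ⟨k, by push_cast; omega⟩
        exact Int.even_sub.mpr
          (by simp [Int.not_even_iff_odd.mpr hj, Int.not_even_iff_odd.mpr hni])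
    obtain ⟨s, hs⟩ := he
    have heE : eExp n j = -s := by
      rw [eExp, if_neg (Nat.not_even_iff_odd.mpr hn), hs,
        show -((s : ℤ) + s) = 2 * (-s) by ring, Int.mul_ediv_cancel_left _ two_ne_zero]
    rw [heE, Aexp]
    refine mul_left_cancel₀ (two_ne_zero (α := ℤ)) ?_
    linear_combination (-(n : ℤ) + j) * h1 + hch - hs

section Aux

variable {K : Type*} [Field K] [Algebra ℚ K] {q : K} (hq : Transcendental ℚ q)

include hq

lemma hq0 : q ≠ 0 := by
  intro h; exact hq (h ▸ isAlgebraic_zero)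

lemma pow_ne_one' {m : ℕ} (hm : 0 < m) : q ^ m ≠ 1 := by
  intro h
  refine hq ⟨X ^ m - C 1, X_pow_sub_C_ne_zero hm 1, ?_⟩
  simp [h]

lemma fac_ne_zero {j k : ℕ} (hk : k < j) : q ^ j - q ^ k ≠ 0 := by
  rw [sub_ne_zero]
  intro h
  apply pow_ne_one' hq (m := j - k) (by omega)
  have h2 : q ^ k * q ^ (j - k) = q ^ k * 1 := by
    rw [mul_one, ← pow_add, show k + (j - k) = j by omega, h]
  exact mul_left_cancel₀ (pow_ne_zero k (hq0 hq)) h2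

lemma D_ne_zero (j : ℕ) : thetaEval q (q ^ j) j ≠ 0 := by
  rw [thetaEval]
  exact Finset.prod_ne_zero_iff.2 fun k hk => fac_ne_zero hq (mem_range.1 hk)

omit hq in
lemma prod_shift (x : K) (j : ℕ) :
    ∏ k ∈ range j, (x * q - q ^ (k + 1)) = q ^ j * ∏ k ∈ range j, (x - q ^ k) := by
  have h1 : ∀ k, x * q - q ^ (k + 1) = q * (x - q ^ k) := by intro k; ring
  simp only [h1]
  rw [Finset.prod_mul_distrib, Finset.prod_const, Finset.card_range]

omit hq in
lemma D_succ (j : ℕ) :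
    thetaEval q (q ^ (j + 1)) (j + 1) = (q ^ (j + 1) - 1) * q ^ j * thetaEval q (q ^ j) j := by
  rw [thetaEval, thetaEval, Finset.prod_range_succ']
  have h := prod_shift (q := q) (q ^ j) j
  rw [show (q : K) ^ j * q = q ^ (j + 1) by ring] at h
  rw [h]
  ring

omit hq in
lemma N_succ (n j : ℕ) :
    thetaEval q (q ^ (n + 1)) (j + 1) = (q ^ (n + 1) - 1) * q ^ j * thetaEval q (q ^ n) j := by
  rw [thetaEval, thetaEval, Finset.prod_range_succ']
  have h := prod_shift (q := q) (q ^ n) j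
  rw [show (q : K) ^ n * q = q ^ (n + 1) by ring] at h
  rw [h]
  ring

omit hq in
lemma N_top (n j : ℕ) :
    thetaEval q (q ^ n) (j + 1) = thetaEval q (q ^ n) j * (q ^ n - q ^ j) := by
  rw [thetaEval, thetaEval, Finset.prod_range_succ]

lemma gauss_diag (n : ℕ) : gaussBinom q n n = 1 :=
  div_self (D_ne_zero hq n)

omit hq in
lemma gauss_zero (n : ℕ) : gaussBinom q n 0 = 1 := by
  simp [gaussBinom, thetaEval]

omit hq in
lemma gauss_over (n : ℕ) : gaussBinom q n (n + 1) = 0 := by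
  rw [gaussBinom]
  have h : thetaEval q (q ^ n) (n + 1) = 0 := by
    rw [thetaEval]
    exact Finset.prod_eq_zero (Finset.self_mem_range_succ n) (sub_self _)
  rw [h, zero_div]

lemma pascal (n j : ℕ) :
    gaussBinom q (n + 1) (j + 1) = gaussBinom q n j + q ^ (j + 1) * gaussBinom q n (j + 1) := by
  rw [gaussBinom, gaussBinom, gaussBinom, N_succ, D_succ, N_top]
  have hD := D_ne_zero hq j
  have h1 : q ^ (j + 1) - (1 : K) ≠ 0 := sub_ne_zero.2 (pow_ne_one' hq (by omega))
  have h2 : q ≠ 0 := hq0 hq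
  have hE : (q ^ (j + 1) - 1) * q ^ j * thetaEval q (q ^ j) j ≠ 0 :=
    mul_ne_zero (mul_ne_zero h1 (pow_ne_zero _ h2)) hD
  field_simp
  ring

lemma step_coeff (c : K) (n j : ℕ) (hj : j ≤ n) :
    c ^ (n - j) * ((-1 : K) ^ (n - j) * q ^ ((n - j).choose 2) * gaussBinom q (n + 1) (j + 1))
      + c * q ^ n *
        (c ^ (n - (j + 1)) * ((-1 : K) ^ (n - (j + 1)) * q ^ ((n - (j + 1)).choose 2)
          * gaussBinom q n (j + 1)))
      = c ^ (n - j) * ((-1 : K) ^ (n - j) * q ^ ((n - j).choose 2) * gaussBinom q n j) := by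
  rcases eq_or_lt_of_le hj with rfl | hlt
  · simp [gauss_diag hq, gauss_over]
  · obtain ⟨m, rfl⟩ : ∃ m, n = j + m + 1 := ⟨n - j - 1, by omega⟩
    rw [show j + m + 1 - j = m + 1 by omega, show j + m + 1 - (j + 1) = m by omega,
      pascal hq, choose2_succ]
    ring

/-- Key q-binomial theorem with scaling constant `c`. -/
lemma key (c : K) (n : ℕ) : ∏ k ∈ range n, (X - C (c * q ^ k)) =
    ∑ j ∈ range (n + 1),
      C (c ^ (n - j) * ((-1 : K) ^ (n - j) * q ^ ((n - j).choose 2) * gaussBinom q n j))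
        * X ^ j := by
  induction n with
  | zero => simp [gauss_zero]
  | succ n ih =>
    rw [Finset.prod_range_succ, ih]
    set a : ℕ → K :=
      fun j => c ^ (n - j) * ((-1 : K) ^ (n - j) * q ^ ((n - j).choose 2) * gaussBinom q n j)
      with ha
    set b : ℕ → K :=
      fun j => c ^ (n + 1 - j) *
        ((-1 : K) ^ (n + 1 - j) * q ^ ((n + 1 - j).choose 2) * gaussBinom q (n + 1) j)
      with hb
    have hstep : ∑ j ∈ range (n + 2), C (b j) * X ^ j
        + ∑ j ∈ range (n + 1), C (c * q ^ n * a j) * X ^ j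
        = ∑ j ∈ range (n + 1), C (a j) * X ^ (j + 1) := by
      have hz : a (n + 1) = 0 := by
        simp [ha, gauss_over]
      have hext : ∑ j ∈ range (n + 1), C (c * q ^ n * a j) * X ^ j
          = ∑ j ∈ range (n + 2), C (c * q ^ n * a j) * X ^ j := by
        rw [Finset.sum_range_succ (n := n + 1), hz]
        simp
      rw [hext, ← Finset.sum_add_distrib]
      have hcomb : ∀ j : ℕ, C (b j) * X ^ j + C (c * q ^ n * a j) * X ^ j
          = C (b j + c * q ^ n * a j) * X ^ j := by
        intro j; rw [C_add, add_mul]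
      simp only [hcomb]
      rw [Finset.sum_range_succ' (fun j => C (b j + c * q ^ n * a j) * X ^ j) (n + 1)]
      have h0 : b 0 + c * q ^ n * a 0 = 0 := by
        simp only [ha, hb, Nat.sub_zero, gauss_zero, choose2_succ]
        ring
      rw [h0]
      simp only [map_zero, zero_mul, add_zero]
      refine Finset.sum_congr rfl fun j hj => ?_
      have hj' : j ≤ n := by simpa [Nat.lt_succ_iff] using hj
      have hstep' : b (j + 1) + c * q ^ n * a (j + 1) = a j := by
        simp only [ha, hb, Nat.succ_sub_succ]
        exact step_coeff hq c n j hj'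
      rw [hstep']
    calc (∑ j ∈ range (n + 1), C (a j) * X ^ j) * (X - C (c * q ^ n))
        = (∑ j ∈ range (n + 1), C (a j) * X ^ (j + 1))
          - ∑ j ∈ range (n + 1), C (c * q ^ n * a j) * X ^ j := by
          rw [mul_sub, Finset.sum_mul, Finset.sum_mul]
          congr 1
          · exact Finset.sum_congr rfl fun j _ => by rw [mul_assoc, ← pow_succ]
          · exact Finset.sum_congr rfl fun j _ => by
              rw [mul_right_comm, ← C_mul, mul_comm (a j) (c * q ^ n)]
      _ = ∑ j ∈ range (n + 2), C (b j) * X ^ j := by rw [← hstep]; ring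

lemma theta_eq (n : ℕ) :
    ThetaPoly q n = ∏ k ∈ range n, (X - C (q ^ Aexp n * q ^ k)) := by
  induction n with
  | zero => simp [ThetaPoly]
  | succ n ih =>
    have hIcc : Finset.Icc 1 (n + 1) = insert (n + 1) (Finset.Icc 1 n) := by
      ext x; simp only [Finset.mem_Icc, Finset.mem_insert]; omega
    have hsplit : ThetaPoly q (n + 1)
        = (X - C (q ^ ((-1 : ℤ) ^ (n + 1) * (((n : ℤ) + 1) / 2)))) * ThetaPoly q n := by
      rw [ThetaPoly, ThetaPoly, hIcc, Finset.prod_insert (by simp)]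
      push_cast
      ring_nf
    rcases Nat.even_or_odd n with hn | hn
    · have he1 : (-1 : ℤ) ^ (n + 1) * (((n : ℤ) + 1) / 2) = Aexp (n + 1) := by
        obtain ⟨k, hk⟩ := hn
        have hpow : (-1 : ℤ) ^ (n + 1) = -1 := Odd.neg_one_pow ⟨k, by omega⟩
        rw [hpow, Aexp]; subst hk; push_cast; omega
      have he2 : Aexp (n + 1) + 1 = Aexp n := by
        obtain ⟨k, hk⟩ := hn; subst hk; simp only [Aexp]; push_cast; omega
      rw [hsplit, ih, Finset.prod_range_succ']
      have hfac : ∀ k : ℕ, q ^ Aexp (n + 1) * q ^ (k + 1) = q ^ Aexp n * q ^ k := by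
        intro k
        rw [← he2, zpow_add₀ (hq0 hq), zpow_one, pow_succ]
        ring
      simp only [hfac, pow_zero, mul_one, he1]
      ring
    · have he1 : (-1 : ℤ) ^ (n + 1) * (((n : ℤ) + 1) / 2) = Aexp n + n := by
        obtain ⟨k, hk⟩ := hn
        have hpow : (-1 : ℤ) ^ (n + 1) = 1 := Even.neg_one_pow ⟨k + 1, by omega⟩
        rw [hpow, Aexp]; subst hk; push_cast; omega
      have he2 : Aexp (n + 1) = Aexp n := by
        obtain ⟨k, hk⟩ := hn; subst hk; simp only [Aexp]; push_cast; omega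
      rw [hsplit, Finset.prod_range_succ, he2, ih]
      have hfac : q ^ Aexp n * q ^ n = q ^ ((-1 : ℤ) ^ (n + 1) * (((n : ℤ) + 1) / 2)) := by
        rw [he1, zpow_add₀ (hq0 hq), zpow_natCast]
      rw [hfac]
      ring

end Aux

/-- For all `n ≥ 0`,
`Θ_n(X) = Σ_{j=0}^{n} (−1)^{n−j} q^{e(n,j)} [n choose j]_q X^j`. -/
theorem stmt11 {K : Type*} [Field K] [Algebra ℚ K] (q : K)
    (hq : Transcendental ℚ q) (n : ℕ) :
    ThetaPoly q n = ∑ j ∈ range (n + 1),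
      C ((-1 : K) ^ (n - j) * q ^ (eExp n j) * gaussBinom q n j) * X ^ j := by
  rw [theta_eq hq, key hq (q ^ Aexp n) n]
  refine Finset.sum_congr rfl fun j hj => ?_
  have hjn : j ≤ n := by simpa [Nat.lt_succ_iff] using hj
  congr 2
  have hkey : (q ^ Aexp n) ^ (n - j) * q ^ ((n - j).choose 2) = q ^ eExp n j := by
    rw [← zpow_natCast (q ^ Aexp n) (n - j), ← zpow_mul,
      ← zpow_natCast q ((n - j).choose 2), ← zpow_add₀ (hq0 hq)]
    congr 1
    rw [← exp_eq n j hjn, Nat.cast_sub hjn]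
  linear_combination ((-1 : K) ^ (n - j) * gaussBinom q n j) * hkey
end

section
/- Let R be the subring of ℚ[z] consisting of polynomials f with f(1 + pℤ_p ∩ ℤ_(p)) ⊆ ℤ_(p), i.e., f(x) ∈ ℤ_(p) for all x ∈ 1 + pℤ_(p). Let p be an odd prime, q primitive mod p², q̂ = q^{p−1}. Then the polynomials f̂_n(z) = ∏_{i=0}^{n-1}(z − q̂^i) / ∏_{i=0}^{n-1}(q̂^n − q̂^i), n ≥ 0, all lie in R. -/
open Finset


lemma aux_basic {p : ℕ} (hp : p.Prime) (q : ℤ)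
    (hq : orderOf ((q : ZMod (p ^ 2))) = p * (p - 1)) :
    (p : ℤ) ∣ q ^ (p - 1) - 1 ∧ ¬ (p : ℤ) ^ 2 ∣ q ^ (p - 1) - 1 := by
  have hp2 : 2 ≤ p := hp.two_le
  have hp1 : 0 < p - 1 := by omega
  have hQp : ((q : ZMod (p ^ 2)) ^ (p - 1)) ^ p = 1 := by
    rw [← pow_mul, mul_comm, ← hq]
    exact pow_orderOf_eq_one _
  have hQne : (q : ZMod (p ^ 2)) ^ (p - 1) ≠ 1 := by
    intro h
    have := orderOf_dvd_of_pow_eq_one h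
    rw [hq] at this
    have := Nat.le_of_dvd hp1 this
    nlinarith
  constructor
  · -- show (Q : ZMod p) = 1
    have hcast : ((q : ZMod p) ^ (p - 1)) ^ p = 1 := by
      have h := congrArg (ZMod.castHom (dvd_pow_self p two_ne_zero) (ZMod p)) hQp
      rw [map_pow, map_pow, map_intCast, map_one] at h
      exact h
    have hne : (q : ZMod p) ≠ 0 := by
      intro h0
      rw [h0, zero_pow (by omega : p - 1 ≠ 0), zero_pow (by omega : p ≠ 0)] at hcast
      haveI : Fact p.Prime := ⟨hp⟩
      exact zero_ne_one hcast
    haveI : Fact p.Prime := ⟨hp⟩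
    have hfermat : (q : ZMod p) ^ (p - 1) = 1 := ZMod.pow_card_sub_one_eq_one hne
    have : ((q : ZMod p) ^ (p - 1) - 1 : ZMod p) = 0 := by rw [hfermat]; ring
    have h2 : ((q ^ (p - 1) - 1 : ℤ) : ZMod p) = 0 := by push_cast; simpa using this
    exact_mod_cast (ZMod.intCast_zmod_eq_zero_iff_dvd _ _).mp h2
  · intro hdvd
    apply hQne
    have h2 : ((q ^ (p - 1) - 1 : ℤ) : ZMod (p ^ 2)) = 0 := by
      rw [ZMod.intCast_zmod_eq_zero_iff_dvd]
      push_cast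
      exact hdvd
    have : ((q : ZMod (p ^ 2)) ^ (p - 1) - 1 : ZMod (p ^ 2)) = 0 := by push_cast at h2; simpa using h2
    linear_combination this


section AuxMain
variable {p : ℕ} (hp : p.Prime) (hodd : Odd p) {Q : ℤ}
  (h1 : (p : ℤ) ∣ Q - 1) (h2 : ¬ (p : ℤ) ^ 2 ∣ Q - 1)
include hp h1 h2 in
lemma aux_npQ : ¬ (p : ℤ) ∣ Q := by
  intro h
  have hd : (p : ℤ) ∣ 1 := by
    have := dvd_sub h h1
    simpa using this
  have := Int.le_of_dvd one_pos hd
  have := hp.one_lt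
  omega

include hp hodd h1 h2 in
lemma aux_lte (j : ℕ) :
    emultiplicity (p : ℤ) (Q ^ j - 1) = 1 + emultiplicity p j := by
  have hx : ¬ (p : ℤ) ∣ Q := aux_npQ hp h1 h2
  have := Int.emultiplicity_pow_sub_pow hp hodd (x := Q) (y := 1) (by simpa using h1) hx j
  rw [one_pow] at this
  rw [this]
  congr 1
  rw [show (1 : ℕ∞) = ((1 : ℕ) : ℕ∞) from rfl, emultiplicity_eq_coe]
  exact ⟨by simpa using h1, by simpa using h2⟩

include hp hodd h1 h2 in
lemma aux_pow_one_iff (k j : ℕ) :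
    ((Q : ZMod (p ^ (k + 1))) ^ j = 1) ↔ p ^ k ∣ j := by
  have e1 : ((Q : ZMod (p ^ (k + 1))) ^ j = 1) ↔ (p : ℤ) ^ (k + 1) ∣ Q ^ j - 1 := by
    have h0 := ZMod.intCast_zmod_eq_zero_iff_dvd (Q ^ j - 1) (p ^ (k + 1))
    push_cast at h0
    rw [← h0, sub_eq_zero]
  rw [e1, pow_dvd_iff_le_emultiplicity, aux_lte hp hodd h1 h2 j]
  rw [show ((k + 1 : ℕ) : ℕ∞) = 1 + (k : ℕ∞) by push_cast; ring]
  rw [ENat.add_le_add_iff_left (by simp : (1 : ℕ∞) ≠ ⊤)]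
  exact pow_dvd_iff_le_emultiplicity.symm

include hp hodd h1 h2 in
lemma aux_order (k : ℕ) : orderOf ((Q : ZMod (p ^ (k + 1)))) = p ^ k := by
  have hiff := aux_pow_one_iff hp hodd h1 h2 k
  refine Nat.dvd_antisymm (orderOf_dvd_of_pow_eq_one ((hiff _).mpr dvd_rfl)) ?_
  exact (hiff _).mp (pow_orderOf_eq_one _)

include hp hodd h1 h2 in
lemma aux_gen (k : ℕ) {X b : ℤ} (hXb : (p : ℤ) ∣ X - b) (hb : ¬ (p : ℤ) ∣ b) :
    ∃ t : ℕ, (p : ℤ) ^ (k + 1) ∣ X - b * Q ^ t := by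
  haveI : Fact p.Prime := ⟨hp⟩
  haveI : NeZero (p ^ (k + 1)) := ⟨pow_ne_zero _ hp.pos.ne'⟩
  have hpX : ¬ (p : ℤ) ∣ X := by
    intro h
    exact hb (by simpa using dvd_sub h hXb)
  -- units from non-divisibility
  have unit_of : ∀ c : ℤ, ¬ (p : ℤ) ∣ c → IsUnit ((c : ZMod (p ^ (k + 1)))) := by
    intro c hc
    have hcop : IsCoprime (c : ℤ) ((p : ℤ) ^ (k + 1)) := by
      have : IsCoprime (c : ℤ) (p : ℤ) := by
        rw [Int.isCoprime_iff_gcd_eq_one]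
        rcases (Nat.coprime_or_dvd_of_prime hp c.natAbs).symm with h | h
        · exact absurd (Int.dvd_natAbs.mp (Int.natCast_dvd_natCast.mpr h)) hc
        · simpa [Int.gcd] using h.symm
      exact this.pow_right
    obtain ⟨u, v, huv⟩ := hcop
    have hz : ((p : ZMod (p ^ (k + 1)))) ^ (k + 1) = 0 := by
      rw [← Nat.cast_pow, ZMod.natCast_self]
    have hone : ((u * c + v * (p : ℤ) ^ (k + 1) : ℤ) : ZMod (p ^ (k + 1))) = 1 := by
      rw [huv]; simp
    push_cast at hone
    rw [hz, mul_zero, add_zero] at hone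
    exact IsUnit.of_mul_eq_one _ (by rw [mul_comm]; exact hone)
  have hQpow : ((Q : ZMod (p ^ (k + 1)))) ^ (p ^ k) = 1 :=
    (aux_pow_one_iff hp hodd h1 h2 k _).mpr dvd_rfl
  have hQu : IsUnit ((Q : ZMod (p ^ (k + 1)))) :=
    IsUnit.of_pow_eq_one hQpow (pow_ne_zero _ hp.pos.ne')
  have hXu := unit_of X hpX
  have hbu := unit_of b hb
  set uQ := hQu.unit with huQ
  set uX := hXu.unit
  set ub := hbu.unit
  have hdvdp : p ∣ p ^ (k + 1) := dvd_pow_self p (Nat.succ_ne_zero k)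
  set φ := ZMod.unitsMap hdvdp with hφ
  -- casting to ZMod p
  have castp : ∀ c : ℤ, ∀ hcu : IsUnit ((c : ZMod (p ^ (k + 1)))),
      ((φ hcu.unit : ZMod p)) = (c : ZMod p) := by
    intro c hcu
    rw [hφ, ZMod.unitsMap_def]
    rw [Units.coe_map]
    simp only [IsUnit.unit_spec, MonoidHom.coe_coe]
    rw [map_intCast]
  have modp_eq : ∀ c d : ℤ, (p : ℤ) ∣ c - d → ((c : ZMod p)) = (d : ZMod p) := by
    intro c d hcd
    have := (ZMod.intCast_zmod_eq_zero_iff_dvd (c - d) p).mpr (by push_cast; exact hcd)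
    push_cast at this
    exact sub_eq_zero.mp this
  -- kernel membership
  have hQ1p : ((Q : ZMod p)) = 1 := by
    have := modp_eq Q 1 h1
    simpa using this
  have hQK : uQ ∈ φ.ker := by
    rw [MonoidHom.mem_ker]
    ext
    rw [castp Q hQu, hQ1p, Units.val_one]
  have hXbK : uX * ub⁻¹ ∈ φ.ker := by
    rw [MonoidHom.mem_ker, map_mul, map_inv]
    have : φ uX = φ ub := by
      ext
      rw [castp X hXu, castp b hbu]
      exact modp_eq X b hXb
    rw [this, mul_inv_cancel]
  -- cardinalities
  have hcardG : Nat.card (ZMod (p ^ (k + 1)))ˣ = p ^ k * (p - 1) := by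
    rw [Nat.card_eq_fintype_card, ZMod.card_units_eq_totient,
      Nat.totient_prime_pow hp (Nat.succ_pos k)]
    simp
  have hcardp : Nat.card (ZMod p)ˣ = p - 1 := by
    haveI : NeZero p := ⟨hp.pos.ne'⟩
    rw [Nat.card_eq_fintype_card, ZMod.card_units_eq_totient, Nat.totient_prime hp]
  have hkercard : Nat.card φ.ker = p ^ k := by
    have hmul := Subgroup.card_mul_index φ.ker
    rw [Subgroup.index_ker] at hmul
    have hrange : φ.range = ⊤ :=
      MonoidHom.range_eq_top.mpr (ZMod.unitsMap_surjective hdvdp)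
    rw [hrange, Subgroup.card_top, hcardp, hcardG] at hmul
    have hpos : 0 < p - 1 := by have := hp.two_le; omega
    exact Nat.eq_of_mul_eq_mul_right hpos hmul
  have hordu : orderOf uQ = p ^ k := by
    rw [← orderOf_units, IsUnit.unit_spec]
    exact aux_order hp hodd h1 h2 k
  have hzle : Subgroup.zpowers uQ ≤ φ.ker := Subgroup.zpowers_le.mpr hQK
  have hzeq : Subgroup.zpowers uQ = φ.ker := by
    apply Subgroup.eq_of_le_of_card_ge hzle
    rw [hkercard, Nat.card_zpowers, hordu]
  have hmem : uX * ub⁻¹ ∈ Subgroup.zpowers uQ := hzeq ▸ hXbK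
  have hfin : IsOfFinOrder uQ := by
    rw [← orderOf_pos_iff, hordu]
    exact pow_pos hp.pos _
  obtain ⟨t, ht⟩ := (Submonoid.mem_powers_iff _ _).mp
    (hfin.mem_powers_iff_mem_zpowers.mpr hmem)
  refine ⟨t, ?_⟩
  have hval : (X : ZMod (p ^ (k + 1))) = (b : ZMod (p ^ (k + 1))) * (Q : ZMod (p ^ (k + 1))) ^ t := by
    have h' : ub * uQ ^ t = uX := by
      rw [ht, mul_comm, inv_mul_cancel_right]
    have := congrArg Units.val h'
    simpa [uX, ub, uQ, IsUnit.unit_spec] using this.symm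
  have : ((X - b * Q ^ t : ℤ) : ZMod (p ^ (k + 1))) = 0 := by
    push_cast
    rw [hval]
    ring
  have hd := (ZMod.intCast_zmod_eq_zero_iff_dvd _ _).mp this
  push_cast at hd
  exact hd

include hp hodd h1 h2 in
lemma aux_count (k n : ℕ) {X b : ℤ} (hXb : (p : ℤ) ∣ X - b) (hb : ¬ (p : ℤ) ∣ b) :
    n / p ^ k ≤ ((range n).filter (fun i => (p : ℤ) ^ (k + 1) ∣ X - b * Q ^ i)).card := by
  obtain ⟨t, ht⟩ := aux_gen hp hodd h1 h2 k hXb hb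
  have hpk : 0 < p ^ k := pow_pos hp.pos k
  set r := t % p ^ k with hr
  -- p^(k+1) ∣ Q^(p^k) - 1
  have hQpk : (p : ℤ) ^ (k + 1) ∣ Q ^ p ^ k - 1 := by
    have h0 := (aux_pow_one_iff hp hodd h1 h2 k (p ^ k)).mpr dvd_rfl
    have : ((Q ^ p ^ k - 1 : ℤ) : ZMod (p ^ (k + 1))) = 0 := by
      push_cast
      rw [h0]; ring
    have hd := (ZMod.intCast_zmod_eq_zero_iff_dvd _ _).mp this
    push_cast at hd
    exact hd
  have hcong : ∀ m : ℕ, (p : ℤ) ^ (k + 1) ∣ Q ^ (m * p ^ k + r) - Q ^ r := by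
    intro m
    have : Q ^ (m * p ^ k + r) - Q ^ r = ((Q ^ p ^ k) ^ m - 1 ^ m) * Q ^ r := by
      rw [pow_add, pow_mul]; ring
    rw [this]
    exact Dvd.dvd.mul_right (dvd_trans hQpk (sub_dvd_pow_sub_pow _ _ m)) _
  have hmain : ∀ m : ℕ, (p : ℤ) ^ (k + 1) ∣ X - b * Q ^ (m * p ^ k + r) := by
    intro m
    have hteq : t / p ^ k * p ^ k + r = t := by
      rw [hr, mul_comm]
      exact Nat.div_add_mod t (p ^ k)
    have e : X - b * Q ^ (m * p ^ k + r) =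
        (X - b * Q ^ t) + b * (Q ^ (t / p ^ k * p ^ k + r) - Q ^ r)
          - b * (Q ^ (m * p ^ k + r) - Q ^ r) := by
      rw [hteq]; ring
    rw [e]
    exact dvd_sub (dvd_add ht ((hcong _).mul_left b)) ((hcong _).mul_left b)
  apply le_trans (le_of_eq (card_range (n / p ^ k)).symm)
  apply Finset.card_le_card_of_injOn (fun j => j * p ^ k + r)
  · intro j hj
    rw [mem_coe, mem_range] at hj
    rw [mem_coe, mem_filter, mem_range]
    refine ⟨?_, hmain j⟩
    have h1' : (j + 1) * p ^ k ≤ n := (Nat.le_div_iff_mul_le hpk).mp hj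
    have h2' : r < p ^ k := Nat.mod_lt _ hpk
    nlinarith
  · intro a _ b' _ hab
    simp only at hab
    exact Nat.eq_of_mul_eq_mul_right hpk (by omega)

include hp in
lemma aux_card_le_emult {z : ℤ} (K : ℕ) :
    ((((range K).filter (fun k => (p : ℤ) ^ (k + 1) ∣ z)).card : ℕ∞)) ≤
      emultiplicity (p : ℤ) z := by
  set S := (range K).filter (fun k => (p : ℤ) ^ (k + 1) ∣ z) with hS
  rcases S.eq_empty_or_nonempty with h | h
  · simp [h]
  · have hm := S.max'_mem h
    have hsub : S ⊆ range (S.max' h + 1) :=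
      fun a ha => mem_range.mpr (Nat.lt_succ_of_le (S.le_max' a ha))
    calc (S.card : ℕ∞) ≤ ((S.max' h + 1 : ℕ) : ℕ∞) := by
          exact_mod_cast (Finset.card_le_card hsub).trans_eq (card_range _)
      _ ≤ emultiplicity (p : ℤ) z :=
          le_emultiplicity_of_pow_dvd (mem_filter.mp hm).2

include hp in
lemma aux_emult_eq_card {j K : ℕ} (hj : j ≠ 0) (hjK : j < p ^ K) :
    emultiplicity p j = (((range K).filter (fun k => p ^ (k + 1) ∣ j)).card : ℕ∞) := by
  have hfin : FiniteMultiplicity p j :=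
    Nat.finiteMultiplicity_iff.mpr ⟨hp.ne_one, Nat.pos_of_ne_zero hj⟩
  rw [hfin.emultiplicity_eq_multiplicity]
  congr 1
  have hmK : multiplicity p j < K := by
    rw [← pow_lt_pow_iff_right₀ hp.one_lt]
    exact lt_of_le_of_lt (Nat.le_of_dvd (Nat.pos_of_ne_zero hj) (pow_multiplicity_dvd p j)) hjK
  have : (range K).filter (fun k => p ^ (k + 1) ∣ j) = range (multiplicity p j) := by
    ext k
    simp only [mem_filter, mem_range]
    rw [hfin.pow_dvd_iff_le_multiplicity]
    omega
  rw [this, card_range]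

lemma aux_card_Icc (n d : ℕ) :
    ((Icc 1 n).filter (fun j => d ∣ j)).card = n / d := by
  rw [← Nat.card_multiples]
  apply Finset.card_bij (fun j _ => j - 1)
  · intro a ha
    simp only [mem_filter, mem_Icc] at ha ⊢
    simp only [mem_range]
    refine ⟨by omega, ?_⟩
    have : a - 1 + 1 = a := by omega
    rw [this]; exact ha.2
  · intro a ha b hb hab
    simp only [mem_filter, mem_Icc] at ha hb
    omega
  · intro b hb
    simp only [mem_filter, mem_range] at hb
    exact ⟨b + 1, by simp only [mem_filter, mem_Icc]; exact ⟨⟨by omega, by omega⟩, hb.2⟩, by omega⟩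

end AuxMain


set_option maxHeartbeats 1000000 in
/-- Let `p` be an odd prime, `q` primitive mod `p²`, `q̂ = q^{p−1}`.  The
rational functions `f̂_n(z) = ∏_{i=0}^{n-1}(z − q̂^i)/∏_{i=0}^{n-1}(q̂^n − q̂^i)`
take `p`-integral values on `1 + pℤ_(p)`: for every `x = 1 + p·y` with `y` a
`p`-integral rational, the value `f̂_n(x)` is `p`-integral (its denominator is
prime to `p`). -/
theorem stmt18 (p : ℕ) (hp : p.Prime) (hodd : Odd p) (q : ℤ)
    (hq : orderOf (q : ZMod (p ^ 2)) = p * (p - 1)) (n : ℕ) :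
    ∀ x : ℚ, (∃ y : ℚ, ¬ (p : ℕ) ∣ y.den ∧ x = 1 + p * y) →
      ¬ (p : ℕ) ∣ ((∏ i ∈ range n, (x - ((q : ℚ) ^ (p - 1)) ^ i)) /
          (∏ i ∈ range n,
            (((q : ℚ) ^ (p - 1)) ^ n - ((q : ℚ) ^ (p - 1)) ^ i))).den := by
  intro x hx
  obtain ⟨y, hyden, hxy⟩ := hx
  haveI : Fact p.Prime := ⟨hp⟩
  have hprime : Prime (p : ℤ) := (Nat.prime_iff_prime_int.mp hp)
  obtain ⟨hQ1, hQ2⟩ := aux_basic hp q hq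
  set Q : ℤ := q ^ (p - 1) with hQdef
  have hnpQ : ¬ (p : ℤ) ∣ Q := aux_npQ hp hQ1 hQ2
  have hQ2le : 2 ≤ Q := by
    have heven : Even (p - 1) := by
      obtain ⟨m, hm⟩ := hodd
      have := hp.two_le
      exact ⟨m, by omega⟩
    have h0 : 0 ≤ Q := heven.pow_nonneg q
    have hne1 : Q ≠ 1 := by
      intro h; apply hQ2; rw [h]; simp
    have hne0 : Q ≠ 0 := by
      intro h
      rw [h] at hQ1
      have h11 : (p : ℤ) ∣ 1 := by simpa [dvd_neg] using hQ1
      have := Int.le_of_dvd one_pos h11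
      have := hp.two_le
      omega
    omega
  set b : ℤ := (y.den : ℤ) with hbdef
  set a : ℤ := y.num with hadef
  set X : ℤ := b + p * a with hXdef
  have hb0 : (0 : ℤ) < b := by rw [hbdef]; exact_mod_cast y.pos
  have hbne : (b : ℚ) ≠ 0 := by exact_mod_cast hb0.ne'
  have hbnd : ¬ (p : ℤ) ∣ b := by
    rw [hbdef, Int.natCast_dvd_natCast]; exact hyden
  have hXb : (p : ℤ) ∣ X - b := ⟨a, by rw [hXdef]; ring⟩
  have hxX : x = (X : ℚ) / (b : ℚ) := by
    rw [hxy, hXdef]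
    have hy : y = (a : ℚ) / (b : ℚ) := (Rat.num_div_den y).symm
    rw [hy]
    push_cast
    field_simp
  set A : ℤ := ∏ i ∈ range n, (X - b * Q ^ i) with hAdef
  set D : ℤ := ∏ i ∈ range n, (Q ^ n - Q ^ i) with hDdef
  have hQcast : ((q : ℚ) ^ (p - 1)) = (Q : ℚ) := by rw [hQdef]; push_cast; rfl
  have hprodnum : (∏ i ∈ range n, (x - ((q : ℚ) ^ (p - 1)) ^ i)) = (A : ℚ) / (b : ℚ) ^ n := by
    have h1' : ∀ i ∈ range n, x - ((q : ℚ) ^ (p - 1)) ^ i = ((X - b * Q ^ i : ℤ) : ℚ) / (b : ℚ) := by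
      intro i _
      rw [hxX, hQcast]
      push_cast
      field_simp
    rw [Finset.prod_congr rfl h1', Finset.prod_div_distrib, Finset.prod_const, card_range, hAdef]
    push_cast
    ring
  have hprodden : (∏ i ∈ range n, (((q : ℚ) ^ (p - 1)) ^ n - ((q : ℚ) ^ (p - 1)) ^ i)) = (D : ℚ) := by
    rw [hDdef]
    push_cast [hQcast]
    ring
  have hnK : n < p ^ (n + 1) := by
    calc n < 2 ^ n := Nat.lt_two_pow_self (n := n)
    _ ≤ 2 ^ (n + 1) := Nat.pow_le_pow_right (by omega) (by omega)
    _ ≤ p ^ (n + 1) := Nat.pow_le_pow_left hp.two_le _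
  set V : ℕ := n + ∑ j ∈ Icc 1 n, ((range (n + 1)).filter (fun k => p ^ (k + 1) ∣ j)).card
    with hVdef
  -- valuation of the denominator
  have hDfac : D = ∏ i ∈ range n, (Q ^ i * (Q ^ (n - i) - 1)) := by
    refine Finset.prod_congr rfl fun i hi => ?_
    rw [mem_range] at hi
    have hin : i + (n - i) = n := by omega
    calc Q ^ n - Q ^ i = Q ^ (i + (n - i)) - Q ^ i := by rw [hin]
    _ = Q ^ i * (Q ^ (n - i) - 1) := by rw [pow_add]; ring
  have heD : emultiplicity (p : ℤ) D = (V : ℕ∞) := by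
    rw [hDfac, Finset.emultiplicity_prod hprime]
    have hterm : ∀ i ∈ range n, emultiplicity (p : ℤ) (Q ^ i * (Q ^ (n - i) - 1)) =
        ((1 + ((range (n + 1)).filter (fun k => p ^ (k + 1) ∣ (n - i))).card : ℕ) : ℕ∞) := by
      intro i hi
      rw [mem_range] at hi
      rw [emultiplicity_mul hprime,
        emultiplicity_eq_zero.mpr (fun h => hnpQ (hprime.dvd_of_dvd_pow h)), zero_add,
        aux_lte hp hodd hQ1 hQ2 (n - i),
        aux_emult_eq_card hp (by omega : n - i ≠ 0)
          (lt_of_le_of_lt (by omega : n - i ≤ n) hnK)]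
      push_cast
      ring
    rw [Finset.sum_congr rfl hterm, ← Nat.cast_sum]
    congr 1
    rw [Finset.sum_add_distrib, Finset.sum_const, card_range, smul_eq_mul, mul_one, hVdef]
    congr 1
    apply Finset.sum_bij (fun i _ => n - i)
    · intro i hi
      rw [mem_range] at hi
      rw [mem_Icc]
      omega
    · intro i hi i' hi' hii
      rw [mem_range] at hi hi'
      omega
    · intro j hj
      rw [mem_Icc] at hj
      exact ⟨n - j, mem_range.mpr (by omega), by omega⟩
    · intro i _
      rfl
  -- valuation of the numerator
  have hVle : V ≤ ∑ i ∈ range n,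
      ((range (n + 1)).filter (fun k => (p : ℤ) ^ (k + 1) ∣ X - b * Q ^ i)).card := by
    have hswap1 : ∑ i ∈ range n,
        ((range (n + 1)).filter (fun k => (p : ℤ) ^ (k + 1) ∣ X - b * Q ^ i)).card =
        ∑ k ∈ range (n + 1), ((range n).filter (fun i => (p : ℤ) ^ (k + 1) ∣ X - b * Q ^ i)).card := by
      simp_rw [Finset.card_filter]
      rw [Finset.sum_comm]
    have hswap2 : ∑ j ∈ Icc 1 n, ((range (n + 1)).filter (fun k => p ^ (k + 1) ∣ j)).card =
        ∑ k ∈ range (n + 1), ((Icc 1 n).filter (fun j => p ^ (k + 1) ∣ j)).card := by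
      simp_rw [Finset.card_filter]
      rw [Finset.sum_comm]
    have hIcc : ∀ k : ℕ, ((Icc 1 n).filter (fun j => p ^ (k + 1) ∣ j)).card = n / p ^ (k + 1) :=
      fun k => aux_card_Icc n _
    have hV2 : V = ∑ k ∈ range (n + 1), n / p ^ k := by
      rw [hVdef, hswap2]
      rw [Finset.sum_congr rfl (fun k _ => hIcc k)]
      rw [Finset.sum_range_succ' (fun k => n / p ^ k), pow_zero, Nat.div_one,
        Finset.sum_range_succ (fun k => n / p ^ (k + 1)), Nat.div_eq_of_lt hnK, add_zero]
      ring
    rw [hV2, hswap1]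
    apply Finset.sum_le_sum
    intro k _
    exact aux_count hp hodd hQ1 hQ2 k n hXb hbnd
  have heA : (V : ℕ∞) ≤ emultiplicity (p : ℤ) A := by
    rw [hAdef, Finset.emultiplicity_prod hprime]
    calc (V : ℕ∞) ≤ ((∑ i ∈ range n,
        ((range (n + 1)).filter (fun k => (p : ℤ) ^ (k + 1) ∣ X - b * Q ^ i)).card : ℕ) : ℕ∞) := by
          exact_mod_cast hVle
    _ ≤ _ := by
          rw [Nat.cast_sum]
          exact Finset.sum_le_sum fun i _ => aux_card_le_emult hp _
  -- assemble
  rw [hprodnum, hprodden]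
  rcases eq_or_ne A 0 with hA0 | hA0
  · rw [hA0]
    norm_num
    intro h
    have := hp.two_le
    omega
  · have hDpos : 0 < D := by
      rw [hDdef]
      apply Finset.prod_pos
      intro i hi
      rw [mem_range] at hi
      have := pow_lt_pow_right₀ (by omega : 1 < Q) hi
      omega
    obtain ⟨D', hD'⟩ : (p : ℤ) ^ V ∣ D := pow_dvd_of_le_emultiplicity (le_of_eq heD.symm)
    have hpD' : ¬ (p : ℤ) ∣ D' := by
      intro h
      have hdd : (p : ℤ) ^ (V + 1) ∣ D := by
        rw [hD', pow_succ]
        exact mul_dvd_mul_left _ h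
      exact not_pow_dvd_of_emultiplicity_lt
        (by rw [heD]; exact_mod_cast Nat.lt_succ_self V) hdd
    obtain ⟨A', hA'⟩ : (p : ℤ) ^ V ∣ A := pow_dvd_of_le_emultiplicity heA
    have hval : ((A : ℚ) / (b : ℚ) ^ n) / (D : ℚ) = (A' : ℚ) / ((b ^ n * D' : ℤ) : ℚ) := by
      rw [hA', hD']
      have hp0 : ((p : ℚ)) ^ V ≠ 0 := pow_ne_zero _ (by exact_mod_cast hp.pos.ne')
      have hD'0 : D' ≠ 0 := by
        intro h
        rw [h, mul_zero] at hD'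
        exact hDpos.ne' hD'
      have hD'q : (D' : ℚ) ≠ 0 := by exact_mod_cast hD'0
      push_cast
      field_simp
    rw [hval]
    have hdvd : (((A' : ℚ) / ((b ^ n * D' : ℤ) : ℚ)).den : ℤ) ∣ b ^ n * D' := by
      rw [← Rat.divInt_eq_div]
      exact Rat.den_dvd _ _
    intro hpden
    have hfin : (p : ℤ) ∣ b ^ n * D' :=
      dvd_trans (Int.natCast_dvd_natCast.mpr hpden) hdvd
    rcases hprime.dvd_mul.mp hfin with h | h
    · exact hbnd (hprime.dvd_of_dvd_pow h)
    · exact hpD' h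
end
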